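/- Let μ = (μ₁, …, μₙ) be a collection of complex numbers. Then the convex hull of {μ₁, …, μₙ} in the complex plane does not contain 0 (i.e., μ belongs to the Poincaré domain) if and only if there exists a constant c > 0 such that for every multi-index α = (α₁, …, αₙ) of nonnegative integers with |α| = α₁ + ⋯ + αₙ ≥ 1, one has |α₁μ₁ + ⋯ + αₙμₙ| ≥ c·|α|. -/

import Mathlib

open Filter

/-- Poincaré domain characterization: 0 is not in the convex hull of the
eigenvalues iff the linear combinations with nonnegative-integer coefficients
are bounded below linearly in the length of the multi-index. -/
theorem poincare_domain_iff (n : ℕ) (μ : Fin n → ℂ) :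
    (0 : ℂ) ∉ convexHull ℝ (Set.range μ) ↔
      ∃ c : ℝ, 0 < c ∧ ∀ α : Fin n → ℕ, 1 ≤ ∑ i, α i →
        c * ((∑ i, α i : ℕ) : ℝ) ≤ ‖∑ i, (α i : ℂ) * μ i‖ := by
  rcases isEmpty_or_nonempty (Fin n) with hn | hn
  · simp only [Finset.univ_eq_empty, Finset.sum_empty]
    constructor
    · intro _
      exact ⟨1, one_pos, fun α h => by omega⟩
    · intro _ h
      have : Set.range μ = ∅ := Set.range_eq_empty μ
      rw [this, convexHull_empty] at h
      exact h
  constructor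
  · intro h0
    have hfin : (Set.range μ).Finite := Set.finite_range μ
    have hcl : IsClosed (convexHull ℝ (Set.range μ)) := hfin.isClosed_convexHull ℝ
    have hne : (convexHull ℝ (Set.range μ)).Nonempty :=
      ⟨μ (Classical.arbitrary _), subset_convexHull ℝ _ (Set.mem_range_self _)⟩
    have hc : 0 < Metric.infDist 0 (convexHull ℝ (Set.range μ)) :=
      (hcl.notMem_iff_infDist_pos hne).1 h0
    refine ⟨_, hc, fun α hα => ?_⟩
    set N : ℕ := ∑ i, α i with hN
    have hNpos : (0:ℝ) < N := by exact_mod_cast hα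
    set p : ℂ := Finset.univ.centerMass (fun i => (α i : ℝ)) μ with hp
    have hmem : p ∈ convexHull ℝ (Set.range μ) :=
      Finset.centerMass_mem_convexHull _ (fun i _ => by positivity)
        (by simpa [hN] using hNpos) (fun i _ => Set.mem_range_self i)
    have hdist : Metric.infDist 0 (convexHull ℝ (Set.range μ)) ≤ ‖p‖ := by
      have := Metric.infDist_le_dist_of_mem (x := (0:ℂ)) hmem
      rwa [dist_zero_left] at this
    have hsum : ∑ i, (α i : ℝ) • μ i = ∑ i, (α i : ℂ) * μ i := by
      refine Finset.sum_congr rfl fun i _ => ?_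
      rw [Complex.real_smul]; norm_num
    have hpval : p = ((N:ℝ))⁻¹ • ∑ i, (α i : ℂ) * μ i := by
      rw [hp, Finset.centerMass, hsum]
      congr 1
      rw [hN]; push_cast; ring
    have habs : ‖p‖ = (N:ℝ)⁻¹ * ‖∑ i, (α i : ℂ) * μ i‖ := by
      rw [hpval, Complex.real_smul, norm_mul, Complex.norm_real, Real.norm_eq_abs,
        abs_of_nonneg (inv_nonneg.2 hNpos.le)]
    rw [habs] at hdist
    calc Metric.infDist 0 (convexHull ℝ (Set.range μ)) * N
        ≤ ((N:ℝ)⁻¹ * ‖∑ i, (α i : ℂ) * μ i‖) * N :=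
          mul_le_mul_of_nonneg_right hdist hNpos.le
      _ = ‖∑ i, (α i : ℂ) * μ i‖ := by field_simp
  · rintro ⟨c, hc, hbound⟩ h0
    rw [convexHull_range_eq_exists_affineCombination] at h0
    obtain ⟨s, w, hw₀, hw₁, hw⟩ := h0
    set t : Fin n → ℝ := fun i => if i ∈ s then w i else 0 with ht
    have ht₀ : ∀ i, 0 ≤ t i := fun i => by
      by_cases hi : i ∈ s <;> simp [ht, hi, hw₀ i]
    have ht₁ : ∑ i, t i = 1 := by
      rw [← hw₁, ht]
      simp [Finset.sum_ite_mem, Finset.univ_inter]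
    have htμ : ∑ i, t i • μ i = 0 := by
      rw [← hw, Finset.affineCombination_eq_linear_combination s μ w hw₁]
      simp only [ht, ite_smul, zero_smul]
      simp [Finset.sum_ite_mem, Finset.univ_inter]
    set B : ℝ := ∑ i, ‖μ i‖ with hB
    have hBnn : 0 ≤ B := Finset.sum_nonneg fun i _ => norm_nonneg _
    obtain ⟨M, hM⟩ : ∃ M : ℕ, (n : ℝ) + B / c < M := exists_nat_gt _
    set a : Fin n → ℕ := fun i => Nat.floor (t i * M) with ha
    have hale : ∀ i, (a i : ℝ) ≤ t i * M := fun i =>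
      Nat.floor_le (mul_nonneg (ht₀ i) (Nat.cast_nonneg M))
    have halt : ∀ i, t i * M - 1 < a i := fun i => by
      have := Nat.lt_floor_add_one (t i * M); simp only [ha]; linarith
    have hsum_lb : (M : ℝ) - n < (∑ i, a i : ℕ) := by
      push_cast
      have h1 : ∑ i, (t i * M - 1) < ∑ i, (a i : ℝ) :=
        Finset.sum_lt_sum_of_nonempty Finset.univ_nonempty fun i _ => halt i
      have h2 : ∑ i, (t i * M - 1) = (M:ℝ) - n := by
        rw [Finset.sum_sub_distrib, ← Finset.sum_mul, ht₁]
        simp [Finset.card_univ]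
      linarith
    have hMn : (n:ℝ) < M := lt_of_le_of_lt (le_add_of_nonneg_right (div_nonneg hBnn hc.le)) hM
    have hα1 : 1 ≤ ∑ i, a i := by
      have h1 : (0:ℝ) < ((∑ i, a i : ℕ) : ℝ) := by linarith
      have : 0 < ∑ i, a i := by exact_mod_cast h1
      omega
    have hkey := hbound a hα1
    have hsmall : ‖∑ i, (a i : ℂ) * μ i‖ ≤ B := by
      have hrw : ∑ i, (a i : ℂ) * μ i = ∑ i, (((a i : ℝ) - t i * M : ℝ) : ℂ) * μ i := by
        have hz : (M:ℂ) * ∑ i, (t i : ℂ) * μ i = 0 := by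
          have h3 : ∑ i, (t i : ℂ) * μ i = 0 := by
            simpa [Complex.real_smul] using htμ
          rw [h3, mul_zero]
        calc ∑ i, (a i : ℂ) * μ i
            = ∑ i, (a i : ℂ) * μ i - (M:ℂ) * ∑ i, (t i : ℂ) * μ i := by rw [hz, sub_zero]
          _ = ∑ i, (((a i : ℝ) - t i * M : ℝ) : ℂ) * μ i := by
              rw [Finset.mul_sum, ← Finset.sum_sub_distrib]
              refine Finset.sum_congr rfl fun i _ => ?_
              push_cast; ring
      rw [hrw]
      calc ‖∑ i, (((a i : ℝ) - t i * M : ℝ) : ℂ) * μ i‖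
          ≤ ∑ i, ‖(((a i : ℝ) - t i * M : ℝ) : ℂ) * μ i‖ :=
            norm_sum_le _ _
        _ ≤ ∑ i, ‖μ i‖ := by
            apply Finset.sum_le_sum
            intro i _
            rw [norm_mul, Complex.norm_real, Real.norm_eq_abs]
            have h1 : |(a i : ℝ) - t i * M| ≤ 1 := by
              rw [abs_le]; constructor <;> [linarith [halt i]; linarith [hale i]]
            calc |(a i : ℝ) - t i * M| * ‖μ i‖
                ≤ 1 * ‖μ i‖ :=
                  mul_le_mul_of_nonneg_right h1 (norm_nonneg _)
              _ = ‖μ i‖ := one_mul _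
    have hBc : B < c * ((M:ℝ) - n) := by
      have h4 : B / c < (M:ℝ) - n := by linarith
      calc B = c * (B / c) := by field_simp
        _ < c * ((M:ℝ) - n) := by exact mul_lt_mul_of_pos_left h4 hc
    have h5 : c * ((M:ℝ) - n) < c * ((∑ i, a i : ℕ) : ℝ) :=
      mul_lt_mul_of_pos_left hsum_lb hc
    linarith
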